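/- Let f : [0,∞) → ℝ be a continuous concave function and define θ(t) = f(|t|) on ℝ. Then θ is a difference of convex functions on ℝ if and only if the right derivative f'(0;+) = lim_{τ↓0} (f(τ) - f(0))/τ exists and is finite. Moreover, when f'(0;+) ≤ 0, θ is concave on ℝ. -/

import Mathlib

open Set Filter

private lemma abs_convexOn : ConvexOn ℝ Set.univ (fun t : ℝ => |t|) := by
  exact (convexOn_univ_norm (E := ℝ))

/-- Slopes from 0 of a concave function on `[0,∞)` are antitone. -/
private lemma slope_anti {f : ℝ → ℝ} (hf : ConcaveOn ℝ (Set.Ici 0) f)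
    {u t : ℝ} (hu : 0 < u) (hut : u ≤ t) :
    (f t - f 0) / t ≤ (f u - f 0) / u := by
  have ht : 0 < t := hu.trans_le hut
  have := hf.neg.secant_mono (a := 0) (x := u) (y := t)
    (le_refl (0:ℝ)) hu.le ht.le hu.ne' ht.ne' hut
  simp only [Pi.neg_apply, sub_zero] at this
  rw [show -f u - -f 0 = -(f u - f 0) by ring, show -f t - -f 0 = -(f t - f 0) by ring,
    neg_div, neg_div, neg_le_neg_iff] at this
  exact this

private lemma anti_of_le_zero {F : ℝ → ℝ} (hF : ConcaveOn ℝ (Set.Ici 0) F)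
    (h0 : ∀ u : ℝ, 0 < u → F u ≤ F 0) : AntitoneOn F (Set.Ici 0) := by
  intro s hs t ht hst
  rcases eq_or_lt_of_le hst with rfl | hst'
  · exact le_rfl
  rcases eq_or_lt_of_le (show (0:ℝ) ≤ s from hs) with rfl | hs'
  · exact h0 t hst'
  · have hadj := hF.slope_anti_adjacent (x := 0) (y := s) (z := t)
      (le_refl (0:ℝ)) ht hs' hst'
    have h1 : (F s - F 0) / (s - 0) ≤ 0 := by
      apply div_nonpos_of_nonpos_of_nonneg
      · linarith [h0 s hs']
      · linarith
    have h2 : (F t - F s) / (t - s) ≤ 0 := hadj.trans h1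
    by_contra hc
    push_neg at hc
    have : 0 < (F t - F s) / (t - s) := div_pos (by linarith) (by linarith)
    linarith

private lemma comp_abs_concave {F : ℝ → ℝ} (hF : ConcaveOn ℝ (Set.Ici 0) F)
    (hanti : AntitoneOn F (Set.Ici 0)) :
    ConcaveOn ℝ Set.univ (fun t => F |t|) := by
  refine ⟨convex_univ, ?_⟩
  intro x _ y _ a b ha hb hab
  simp only [smul_eq_mul]
  have h1 : |a * x + b * y| ≤ a * |x| + b * |y| := by
    calc |a * x + b * y| ≤ |a * x| + |b * y| := abs_add_le _ _
    _ = a * |x| + b * |y| := by rw [abs_mul, abs_mul, abs_of_nonneg ha, abs_of_nonneg hb]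
  have hmem1 : |a * x + b * y| ∈ Set.Ici (0:ℝ) := Set.mem_Ici.2 (abs_nonneg _)
  have hmem2 : a * |x| + b * |y| ∈ Set.Ici (0:ℝ) := by
    have := mul_nonneg ha (abs_nonneg x)
    have := mul_nonneg hb (abs_nonneg y)
    simp only [Set.mem_Ici]; linarith
  have h2 : F (a * |x| + b * |y|) ≤ F |a * x + b * y| := hanti hmem1 hmem2 h1
  have h3 : a * F |x| + b * F |y| ≤ F (a * |x| + b * |y|) := by
    simpa [smul_eq_mul] using hF.2 (Set.mem_Ici.2 (abs_nonneg x)) (Set.mem_Ici.2 (abs_nonneg y)) ha hb hab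
  linarith

theorem folded_concave_dc_iff (f : ℝ → ℝ)
    (hfcont : ContinuousOn f (Set.Ici 0))
    (hfconc : ConcaveOn ℝ (Set.Ici 0) f)
    (θ : ℝ → ℝ) (hθ : ∀ t, θ t = f |t|) :
    ((∃ g h : ℝ → ℝ, ConvexOn ℝ Set.univ g ∧ ConvexOn ℝ Set.univ h ∧
        ∀ t, θ t = g t - h t) ↔
      ∃ d : ℝ, Filter.Tendsto (fun τ => (f τ - f 0) / τ)
        (nhdsWithin 0 (Set.Ioi 0)) (nhds d)) ∧
    (∀ d : ℝ, Filter.Tendsto (fun τ => (f τ - f 0) / τ)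
        (nhdsWithin 0 (Set.Ioi 0)) (nhds d) → d ≤ 0 →
      ConcaveOn ℝ Set.univ θ) := by
  -- key fact: if the slope tends to d, then every slope is ≤ d
  have key : ∀ d : ℝ, Tendsto (fun τ => (f τ - f 0) / τ) (nhdsWithin 0 (Set.Ioi 0)) (nhds d) →
      ∀ t : ℝ, 0 < t → (f t - f 0) / t ≤ d := by
    intro d hd t ht
    refine ge_of_tendsto hd ?_
    filter_upwards [Ioo_mem_nhdsGT_of_mem (by constructor <;> simp [ht] : (0:ℝ) ∈ Set.Ico 0 t)]
      with u hu
    exact slope_anti hfconc hu.1 hu.2.le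
  constructor
  · constructor
    · -- dc ⇒ limit exists
      rintro ⟨g, h, hg, hh, hgh⟩
      -- slope functions of g and h at 0
      have slopemono : ∀ (g : ℝ → ℝ), ConvexOn ℝ Set.univ g →
          MonotoneOn (fun u => (g u - g 0) / u) (Set.Ioi 0) := by
        intro g hg u hu v hv huv
        have := hg.secant_mono (a := 0) (x := u) (y := v)
          (Set.mem_univ _) (Set.mem_univ _) (Set.mem_univ _)
          (ne_of_gt hu) (ne_of_gt hv) huv
        simpa using this
      have slopebdd : ∀ (g : ℝ → ℝ), ConvexOn ℝ Set.univ g →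
          BddBelow ((fun u => (g u - g 0) / u) '' Set.Ioi 0) := by
        intro g hg
        refine ⟨(g 0 - g (-1)) / 1, ?_⟩
        rintro x ⟨u, hu, rfl⟩
        have := hg.secant_mono (a := 0) (x := -1) (y := u)
          (Set.mem_univ _) (Set.mem_univ _) (Set.mem_univ _)
          (by norm_num) (ne_of_gt hu) (by linarith [Set.mem_Ioi.mp hu])
        simp only [sub_zero] at this ⊢
        calc (g 0 - g (-1)) / 1 = (g (-1) - g 0) / (-1) := by ring
        _ ≤ (g u - g 0) / u := this
      have hgt := (slopemono g hg).tendsto_nhdsGT (slopebdd g hg)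
      have hht := (slopemono h hh).tendsto_nhdsGT (slopebdd h hh)
      refine ⟨_, Tendsto.congr' ?_ (hgt.sub hht)⟩
      filter_upwards [self_mem_nhdsWithin] with u hu
      have hu' : (0:ℝ) < u := hu
      have hfu : f u = g u - h u := by
        have := hgh u
        rw [hθ u, abs_of_pos hu'] at this
        linarith
      have hf0 : f 0 = g 0 - h 0 := by
        have := hgh 0
        rw [hθ 0, abs_zero] at this
        linarith
      rw [hfu, hf0]
      ring
    · -- limit exists ⇒ dc
      rintro ⟨d, hd⟩
      set F : ℝ → ℝ := fun t => f t - d * t with hFdef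
      have hFconc : ConcaveOn ℝ (Set.Ici 0) F := by
        refine hfconc.sub ⟨convex_Ici 0, ?_⟩
        intro x _ y _ a b _ _ _
        simp only [smul_eq_mul]
        apply le_of_eq
        ring
      have hF0 : ∀ u : ℝ, 0 < u → F u ≤ F 0 := by
        intro u hu
        have := key d hd u hu
        have h1 : f u - f 0 ≤ d * u := by
          rw [div_le_iff₀ hu] at this
          linarith
        simp only [hFdef]
        ring_nf
        nlinarith
      have hanti := anti_of_le_zero hFconc hF0
      have hφ := comp_abs_concave hFconc hanti
      refine ⟨fun t => |d| * |t|, fun t => (|d| - d) * |t| + -(F |t|), ?_, ?_, ?_⟩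
      · have := abs_convexOn.smul (abs_nonneg d)
        simpa [smul_eq_mul] using this
      · have h1 := abs_convexOn.smul (sub_nonneg.mpr (le_abs_self d))
        have h2 : ConvexOn ℝ Set.univ (fun t => -(F |t|)) := hφ.neg
        have := h1.add h2
        exact this
      · intro t
        rw [hθ t]
        simp only [hFdef]
        ring
  · -- d ≤ 0 ⇒ θ concave
    intro d hd hd0
    have hF0 : ∀ u : ℝ, 0 < u → f u ≤ f 0 := by
      intro u hu
      have := key d hd u hu
      have : (f u - f 0) / u ≤ 0 := this.trans hd0
      nlinarith [div_le_iff₀ hu |>.mp this]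
    have hanti := anti_of_le_zero hfconc hF0
    have := comp_abs_concave hfconc hanti
    have hθ' : θ = fun t => f |t| := funext hθ
    rw [hθ']
    exact this
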